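/- Let {P_x^{(θ)}} be a complete set of MUMs on a d-dimensional space H_A with efficiency κ, and X̃ a positive semidefinite operator on H_A ⊗ H_B with Tr[X̃²] ≤ Tr_B[(Tr_A X̃)²] (e.g., arising from a state with nonnegative conditional collision entropy). If Tr_B[(Tr_A X̃)²] = 1, then ∑_{θ,x} Tr_B[(Tr_A[(P_x^{(θ)} ⊗ I)X̃])²] ≤ f(κ) + g(κ), i.e. the total collision quantity is at most f(κ) + g(κ) = 2. -/

import Mathlib

open Matrix Kronecker BigOperators Complex
open scoped ComplexOrder

lemma trace_AhA (n : ℕ) (A : Matrix (Fin n) (Fin n) ℂ) :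
    ((Aᴴ * A).trace) = ∑ i, ∑ j, (normSq (A i j) : ℂ) := by
  simp only [Matrix.trace, Matrix.mul_apply, Matrix.diag, Matrix.conjTranspose_apply]
  rw [Finset.sum_comm]
  refine Finset.sum_congr rfl fun i _ => Finset.sum_congr rfl fun j _ => ?_
  rw [mul_comm]; exact Complex.mul_conj _

lemma keyY (d : ℕ) (hd : 2 ≤ d) (κ : ℝ) (hκ1 : 1 / (d : ℝ) < κ) (hκ2 : κ ≤ 1)
    (P : Fin (d + 1) → Fin d → Matrix (Fin d) (Fin d) ℂ)
    (hHerm : ∀ θ x, (P θ x).IsHermitian)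
    (hPOVM : ∀ θ, ∑ x, P θ x = 1)
    (hTr : ∀ θ x, (P θ x).trace = 1)
    (hUnbiased : ∀ θ θ', θ ≠ θ' → ∀ x y, (P θ x * P θ' y).trace = 1 / (d : ℂ))
    (hSame : ∀ θ x x', (P θ x * P θ x').trace =
      if x = x' then (κ : ℂ) else ((1 - κ) / ((d : ℝ) - 1) : ℝ))
    (Y : Matrix (Fin d) (Fin d) ℂ) :
    ∑ θ : Fin (d+1), ∑ x : Fin d, normSq ((P θ x * Y).trace) ≤
      (1 + (1 - κ) / ((d : ℝ) - 1)) * normSq Y.trace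
      + ((κ * d - 1) / ((d : ℝ) - 1)) * ∑ i, ∑ j, normSq (Y i j) := by
  have hd0 : (0:ℝ) < (d:ℝ) := by
    have : (0:ℕ) < d := by omega
    exact_mod_cast this
  have hd1 : (0:ℝ) < (d:ℝ) - 1 := by
    have : (1:ℕ) < d := by omega
    have : (1:ℝ) < (d:ℝ) := by exact_mod_cast this
    linarith
  have hdC : (d:ℂ) ≠ 0 := by
    exact_mod_cast Nat.cast_ne_zero.mpr (by omega : d ≠ 0)
  set t : ℂ := Y.trace with ht
  set g : ℝ := (κ * d - 1) / ((d:ℝ) - 1) with hgdef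
  have hg : 0 < g := by
    apply div_pos _ hd1
    have := (div_lt_iff₀ hd0).mp hκ1
    linarith [mul_comm κ (d:ℝ)]
  -- coefficients
  set a : Fin (d+1) → Fin d → ℂ := fun θ x => (P θ x * Y).trace - t / d with ha
  have hsum : ∀ θ, ∑ x, a θ x = 0 := by
    intro θ
    have h1 : ∑ x, (P θ x * Y).trace = t := by
      rw [← Matrix.trace_sum, ← Matrix.sum_mul, hPOVM θ, Matrix.one_mul]
    rw [Finset.sum_sub_distrib, h1, Finset.sum_const, Finset.card_fin, nsmul_eq_mul]
    field_simp
    ring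
  set S : ℝ := ∑ θ, ∑ x, normSq (a θ x) with hS
  set Z : Matrix (Fin d) (Fin d) ℂ := Y - (t / d) • (1 : Matrix (Fin d) (Fin d) ℂ) with hZ
  set u : Matrix (Fin d) (Fin d) ℂ := ∑ θ, ∑ x, a θ x • P θ x with hu
  have hPZ : ∀ θ x, (P θ x * Z).trace = a θ x := by
    intro θ x
    rw [hZ, Matrix.mul_sub, Matrix.mul_smul, Matrix.mul_one, Matrix.trace_sub,
      Matrix.trace_smul, hTr, smul_eq_mul, mul_one]
  have huH : uᴴ = ∑ θ, ∑ x, (starRingEnd ℂ) (a θ x) • P θ x := by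
    rw [hu, Matrix.conjTranspose_sum]
    refine Finset.sum_congr rfl fun θ _ => ?_
    rw [Matrix.conjTranspose_sum]
    refine Finset.sum_congr rfl fun x _ => ?_
    rw [Matrix.conjTranspose_smul, (hHerm θ x).eq, starRingEnd_apply]
  have hconjmul : ∀ z : ℂ, (starRingEnd ℂ) z * z = (normSq z : ℂ) := fun z => by
    rw [mul_comm]; exact Complex.mul_conj z
  have huZ : (uᴴ * Z).trace = (S : ℂ) := by
    rw [huH, Matrix.sum_mul, Matrix.trace_sum]
    rw [show (S:ℂ) = ∑ θ : Fin (d+1), ∑ x : Fin d, (normSq (a θ x) : ℂ) by push_cast [hS]; ring]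
    refine Finset.sum_congr rfl fun θ _ => ?_
    rw [Matrix.sum_mul, Matrix.trace_sum]
    refine Finset.sum_congr rfl fun x _ => ?_
    rw [Matrix.smul_mul, Matrix.trace_smul, smul_eq_mul, hPZ, hconjmul]
  have hZu : (Zᴴ * u).trace = (S : ℂ) := by
    have : (Zᴴ * u) = (uᴴ * Z)ᴴ := by
      rw [Matrix.conjTranspose_mul, Matrix.conjTranspose_conjTranspose]
    rw [this, Matrix.trace_conjTranspose, huZ]
    simp
  -- inner sum computation
  have hκsplit : (κ : ℂ) = (((1 - κ) / ((d : ℝ) - 1) : ℝ) : ℂ) + (g : ℂ) := by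
    have : κ = (1 - κ) / ((d:ℝ) - 1) + g := by
      rw [hgdef]; field_simp; ring
    exact_mod_cast congrArg (Complex.ofReal) this
  have inner : ∀ θ x, (∑ θ', ∑ y, (starRingEnd ℂ) (a θ x) * a θ' y * (P θ x * P θ' y).trace)
      = (g : ℂ) * (normSq (a θ x) : ℂ) := by
    intro θ x
    have h1 : ∀ θ' : Fin (d+1), θ' ≠ θ →
        (∑ y, (starRingEnd ℂ) (a θ x) * a θ' y * (P θ x * P θ' y).trace) = 0 := by
      intro θ' hne
      have htr : ∀ y, (P θ x * P θ' y).trace = 1 / (d:ℂ) := fun y =>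
        hUnbiased θ θ' (Ne.symm hne) x y
      calc (∑ y, (starRingEnd ℂ) (a θ x) * a θ' y * (P θ x * P θ' y).trace)
          = ((starRingEnd ℂ) (a θ x) * (1/(d:ℂ))) * ∑ y, a θ' y := by
            rw [Finset.mul_sum]
            exact Finset.sum_congr rfl fun y _ => by rw [htr]; ring
        _ = 0 := by rw [hsum θ', mul_zero]
    rw [Finset.sum_eq_single_of_mem θ (Finset.mem_univ θ) (fun θ' _ hne => h1 θ' hne)]
    have h2 : ∀ y, (P θ x * P θ y).trace
        = (((1 - κ) / ((d : ℝ) - 1) : ℝ) : ℂ) + (if x = y then (g:ℂ) else 0) := by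
      intro y
      rw [hSame]
      split_ifs with h
      · rw [hκsplit]
      · rw [add_zero]
    calc (∑ y, (starRingEnd ℂ) (a θ x) * a θ y * (P θ x * P θ y).trace)
        = (∑ y, (starRingEnd ℂ) (a θ x) * a θ y * (((1 - κ) / ((d : ℝ) - 1) : ℝ) : ℂ))
          + (∑ y, (starRingEnd ℂ) (a θ x) * a θ y * (if x = y then (g:ℂ) else 0)) := by
          rw [← Finset.sum_add_distrib]
          exact Finset.sum_congr rfl fun y _ => by rw [h2]; ring
      _ = (g : ℂ) * (normSq (a θ x) : ℂ) := by
          have e1 : (∑ y, (starRingEnd ℂ) (a θ x) * a θ y * (((1 - κ) / ((d : ℝ) - 1) : ℝ) : ℂ))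
              = ((starRingEnd ℂ) (a θ x) * (((1 - κ) / ((d : ℝ) - 1) : ℝ) : ℂ)) * ∑ y, a θ y := by
            rw [Finset.mul_sum]
            exact Finset.sum_congr rfl fun y _ => by ring
          have e2 : (∑ y, (starRingEnd ℂ) (a θ x) * a θ y * (if x = y then (g:ℂ) else 0))
              = (starRingEnd ℂ) (a θ x) * a θ x * (g:ℂ) := by
            rw [Finset.sum_eq_single_of_mem x (Finset.mem_univ x)
              (fun y _ hne => by simp [Ne.symm hne])]
            simp
          rw [e1, e2, hsum θ, mul_zero, zero_add, hconjmul]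
          ring
  have huu : (uᴴ * u).trace = (g : ℂ) * (S : ℂ) := by
    have expand : (uᴴ * u).trace
        = ∑ θ, ∑ x, ∑ θ', ∑ y, (starRingEnd ℂ) (a θ x) * a θ' y * (P θ x * P θ' y).trace := by
      rw [huH, hu, Matrix.sum_mul, Matrix.trace_sum]
      refine Finset.sum_congr rfl fun θ _ => ?_
      rw [Matrix.sum_mul, Matrix.trace_sum]
      refine Finset.sum_congr rfl fun x _ => ?_
      rw [Matrix.smul_mul, Matrix.mul_sum, Matrix.trace_smul, Matrix.trace_sum, smul_eq_mul,
        Finset.mul_sum]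
      refine Finset.sum_congr rfl fun θ' _ => ?_
      rw [Matrix.mul_sum, Matrix.trace_sum, Finset.mul_sum]
      refine Finset.sum_congr rfl fun y _ => ?_
      rw [Matrix.mul_smul, Matrix.trace_smul, smul_eq_mul]
      ring
    rw [expand]
    rw [show (g:ℂ) * (S:ℂ) = ∑ θ : Fin (d+1), ∑ x : Fin d, (g:ℂ) * (normSq (a θ x) : ℂ) by
      push_cast [hS]; rw [Finset.mul_sum]; exact Finset.sum_congr rfl fun θ _ => by
        rw [Finset.mul_sum]]
    exact Finset.sum_congr rfl fun θ _ => Finset.sum_congr rfl fun x _ => inner θ x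
  -- norm of Z
  set NY : ℝ := ∑ i, ∑ j, normSq (Y i j) with hNY
  have hYY : (Yᴴ * Y).trace = (NY : ℂ) := by
    rw [trace_AhA]; push_cast [hNY]; ring
  have hZZ : (Zᴴ * Z).trace = ((NY - normSq t / d : ℝ) : ℂ) := by
    have hmc : (starRingEnd ℂ) t * t = (normSq t : ℂ) := hconjmul t
    rw [hZ]
    simp only [Matrix.conjTranspose_sub, Matrix.conjTranspose_smul, Matrix.conjTranspose_one,
      Matrix.sub_mul, Matrix.mul_sub, Matrix.smul_mul, Matrix.mul_smul, Matrix.one_mul,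
      Matrix.mul_one, Matrix.trace_sub, Matrix.trace_smul, Matrix.trace_one,
      Matrix.trace_conjTranspose, smul_eq_mul, smul_smul, Complex.star_def, hYY, ← ht]
    push_cast
    field_simp
    simp only [Fintype.card_fin]
    linear_combination -hmc
  -- positivity
  have hVpos : 0 ≤ ((((g:ℂ) • Z - u)ᴴ * ((g:ℂ) • Z - u)).trace).re := by
    rw [trace_AhA]
    rw [show (∑ i, ∑ j, (normSq ((((g:ℂ) • Z - u)) i j) : ℂ))
        = ((∑ i, ∑ j, normSq ((((g:ℂ) • Z - u)) i j) : ℝ) : ℂ) by push_cast; ring]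
    rw [Complex.ofReal_re]
    exact Finset.sum_nonneg fun i _ => Finset.sum_nonneg fun j _ => normSq_nonneg _
  have hVtrace : ((((g:ℂ) • Z - u)ᴴ * ((g:ℂ) • Z - u)).trace)
      = ((g^2 * (NY - normSq t / d) - g * S : ℝ) : ℂ) := by
    simp only [Matrix.conjTranspose_sub, Matrix.conjTranspose_smul, Matrix.sub_mul,
      Matrix.mul_sub, Matrix.smul_mul, Matrix.mul_smul, Matrix.trace_sub, Matrix.trace_smul,
      smul_eq_mul, smul_smul, Complex.star_def, Complex.conj_ofReal, huu, huZ, hZu, hZZ]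
    push_cast
    ring
  have hSg : S ≤ g * (NY - normSq t / d) := by
    have := hVpos
    rw [hVtrace, Complex.ofReal_re] at this
    nlinarith [sq_nonneg g, hg]
  -- LHS expansion
  have hLHS : (∑ θ : Fin (d+1), ∑ x : Fin d, normSq ((P θ x * Y).trace))
      = S + ((d:ℝ)+1) * (normSq t / d) := by
    have hx : ∀ θ x, (P θ x * Y).trace = a θ x + t / d := by
      intro θ x; rw [ha]; ring
    have hθ : ∀ θ : Fin (d+1), (∑ x, normSq ((P θ x * Y).trace))
        = (∑ x, normSq (a θ x)) + normSq t / d := by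
      intro θ
      have : ∀ x : Fin d, normSq ((P θ x * Y).trace)
          = normSq (a θ x) + normSq (t/d) + 2 * (a θ x * (starRingEnd ℂ) (t/d)).re := by
        intro x; rw [hx, Complex.normSq_add]
      rw [Finset.sum_congr rfl fun x _ => this x]
      rw [Finset.sum_add_distrib, Finset.sum_add_distrib]
      have e1 : (∑ _x : Fin d, normSq (t/d)) = normSq t / d := by
        rw [Finset.sum_const, Finset.card_fin, nsmul_eq_mul, Complex.normSq_div]
        rw [show normSq ((d:ℕ):ℂ) = (d:ℝ)^2 by
          rw [Complex.normSq_natCast]; push_cast; ring]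
        field_simp
      have e2 : (∑ x : Fin d, 2 * (a θ x * (starRingEnd ℂ) (t/d)).re) = 0 := by
        rw [← Finset.mul_sum, ← Complex.re_sum, ← Finset.sum_mul, hsum θ, zero_mul]
        simp
      rw [e1, e2, add_zero]
    rw [Finset.sum_congr rfl fun θ _ => hθ θ, Finset.sum_add_distrib, hS,
      Finset.sum_const, Finset.card_fin, nsmul_eq_mul]
    push_cast; ring
  -- conclude
  have hfg : ((d:ℝ)+1) * (1/(d:ℝ)) - g * (1/(d:ℝ)) = 1 + (1 - κ) / ((d : ℝ) - 1) := by
    rw [hgdef]; field_simp; ring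
  rw [hLHS]
  have key : ((d:ℝ)+1) * (normSq t / d) - g * (normSq t / d)
      = (1 + (1 - κ) / ((d : ℝ) - 1)) * normSq t := by
    rw [hgdef]; field_simp; ring
  have hexp : g * (NY - normSq t / d) = g * NY - g * (normSq t / d) := by ring
  linarith [hSg]

lemma trace_mul_sum {n : Type*} [Fintype n] (A B : Matrix n n ℂ) :
    (A * B).trace = ∑ i, ∑ j, A i j * B j i := by
  simp only [Matrix.trace, Matrix.mul_apply, Matrix.diag]

lemma trace_mul_conjT (n : ℕ) (A : Matrix (Fin n) (Fin n) ℂ) (hA : A.IsHermitian)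
    (B : Matrix (Fin n) (Fin n) ℂ) :
    (A * Bᴴ).trace = (starRingEnd ℂ) ((A * B).trace) := by
  rw [starRingEnd_apply, ← Matrix.trace_conjTranspose, Matrix.conjTranspose_mul, hA.eq,
    Matrix.trace_mul_comm]

lemma sum_swap4 {α β γ δ M : Type*} [Fintype α] [Fintype β] [Fintype γ] [Fintype δ]
    [AddCommMonoid M] (f : α → β → γ → δ → M) :
    ∑ a, ∑ b, ∑ c, ∑ e, f a b c e = ∑ c, ∑ e, ∑ a, ∑ b, f a b c e := by
  calc ∑ a, ∑ b, ∑ c, ∑ e, f a b c e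
      = ∑ a, ∑ c, ∑ b, ∑ e, f a b c e := Finset.sum_congr rfl fun a _ => by
        rw [Finset.sum_comm]
    _ = ∑ c, ∑ a, ∑ b, ∑ e, f a b c e := by rw [Finset.sum_comm]
    _ = ∑ c, ∑ a, ∑ e, ∑ b, f a b c e := Finset.sum_congr rfl fun c _ =>
        Finset.sum_congr rfl fun a _ => by rw [Finset.sum_comm]
    _ = ∑ c, ∑ e, ∑ a, ∑ b, f a b c e := Finset.sum_congr rfl fun c _ => by
        rw [Finset.sum_comm]

lemma sum_swap4' {α β γ δ M : Type*} [Fintype α] [Fintype β] [Fintype γ] [Fintype δ]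
    [AddCommMonoid M] (f : α → β → γ → δ → M) :
    ∑ a, ∑ b, ∑ c, ∑ e, f a b c e = ∑ b, ∑ e, ∑ a, ∑ c, f a b c e := by
  calc ∑ a, ∑ b, ∑ c, ∑ e, f a b c e
      = ∑ b, ∑ a, ∑ c, ∑ e, f a b c e := by rw [Finset.sum_comm]
    _ = ∑ b, ∑ a, ∑ e, ∑ c, f a b c e := Finset.sum_congr rfl fun b _ =>
        Finset.sum_congr rfl fun a _ => by rw [Finset.sum_comm]
    _ = ∑ b, ∑ e, ∑ a, ∑ c, f a b c e := Finset.sum_congr rfl fun b _ => by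
        rw [Finset.sum_comm]

noncomputable section

/-- Partial trace over the `A` factor. -/
def ptraceA (dA dB : ℕ) (X : Matrix (Fin dA × Fin dB) (Fin dA × Fin dB) ℂ) :
    Matrix (Fin dB) (Fin dB) ℂ :=
  fun b b' => ∑ a, X (a, b) (a, b')


theorem stmt15 (dA dB : ℕ) (hd : 2 ≤ dA) (κ : ℝ) (hκ1 : 1 / (dA : ℝ) < κ) (hκ2 : κ ≤ 1)
    (P : Fin (dA + 1) → Fin dA → Matrix (Fin dA) (Fin dA) ℂ)
    (hPos : ∀ θ x, (P θ x).PosSemidef)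
    (hPOVM : ∀ θ, ∑ x, P θ x = 1)
    (hTr : ∀ θ x, (P θ x).trace = 1)
    (hUnbiased : ∀ θ θ', θ ≠ θ' → ∀ x y, (P θ x * P θ' y).trace = 1 / (dA : ℂ))
    (hSame : ∀ θ x x', (P θ x * P θ x').trace =
      if x = x' then (κ : ℂ) else ((1 - κ) / ((dA : ℝ) - 1) : ℝ))
    (X : Matrix (Fin dA × Fin dB) (Fin dA × Fin dB) ℂ) (hXpos : X.PosSemidef)
    (hXnorm : (ptraceA dA dB X * ptraceA dA dB X).trace = 1)
    (hXcoll : (X * X).trace.re ≤ 1) :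
    (∑ θ : Fin (dA + 1), ∑ x : Fin dA,
        (ptraceA dA dB (((P θ x) ⊗ₖ (1 : Matrix (Fin dB) (Fin dB) ℂ)) * X) *
          ptraceA dA dB (((P θ x) ⊗ₖ (1 : Matrix (Fin dB) (Fin dB) ℂ)) * X)).trace).re ≤
      (1 + (1 - κ) / ((dA : ℝ) - 1)) + (κ * dA - 1) / ((dA : ℝ) - 1) := by
  have hXH : Xᴴ = X := hXpos.1
  set Y : Fin dB → Fin dB → Matrix (Fin dA) (Fin dA) ℂ := fun b b' p q => X (p, b) (q, b')
    with hY
  have hXconj : ∀ (p q : Fin dA × Fin dB), X q p = (starRingEnd ℂ) (X p q) := by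
    intro p q
    have := congrFun (congrFun hXH q) p
    rw [Matrix.conjTranspose_apply] at this
    rw [← this]
    simp
  have hptr : ∀ θ x (b b' : Fin dB),
      ptraceA dA dB ((P θ x ⊗ₖ (1 : Matrix (Fin dB) (Fin dB) ℂ)) * X) b b'
        = (P θ x * Y b b').trace := by
    intro θ x b b'
    simp only [ptraceA, Matrix.mul_apply, Matrix.trace, Matrix.diag, hY,
      Matrix.kroneckerMap_apply, Fintype.sum_prod_type, Matrix.one_apply]
    refine Finset.sum_congr rfl fun a _ => Finset.sum_congr rfl fun a' _ => ?_
    rw [Finset.sum_eq_single_of_mem b (Finset.mem_univ b)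
      (fun c _ hne => by simp [Ne.symm hne])]
    simp
  have hYherm : ∀ b b', (Y b b')ᴴ = Y b' b := by
    intro b b'
    ext p q
    rw [Matrix.conjTranspose_apply]
    simp only [hY]
    rw [← starRingEnd_apply]
    exact (hXconj _ _).symm
  have htermre : ∀ θ x,
      ((ptraceA dA dB ((P θ x ⊗ₖ (1 : Matrix (Fin dB) (Fin dB) ℂ)) * X) *
        ptraceA dA dB ((P θ x ⊗ₖ (1 : Matrix (Fin dB) (Fin dB) ℂ)) * X)).trace).re
      = ∑ b, ∑ b', normSq ((P θ x * Y b b').trace) := by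
    intro θ x
    rw [trace_mul_sum]
    have : ∀ b b' : Fin dB,
        ptraceA dA dB ((P θ x ⊗ₖ (1 : Matrix (Fin dB) (Fin dB) ℂ)) * X) b b'
          * ptraceA dA dB ((P θ x ⊗ₖ (1 : Matrix (Fin dB) (Fin dB) ℂ)) * X) b' b
        = (normSq ((P θ x * Y b b').trace) : ℂ) := by
      intro b b'
      rw [hptr, hptr]
      have h1 : (P θ x * Y b' b).trace = (starRingEnd ℂ) ((P θ x * Y b b').trace) := by
        rw [← hYherm b b', trace_mul_conjT _ _ (hPos θ x).1]
      rw [h1, Complex.mul_conj]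
    rw [Finset.sum_congr rfl fun b _ => Finset.sum_congr rfl fun b' _ => this b b']
    push_cast
    simp
  have hre : (∑ θ : Fin (dA + 1), ∑ x : Fin dA,
      (ptraceA dA dB (((P θ x) ⊗ₖ (1 : Matrix (Fin dB) (Fin dB) ℂ)) * X) *
        ptraceA dA dB (((P θ x) ⊗ₖ (1 : Matrix (Fin dB) (Fin dB) ℂ)) * X)).trace).re
      = ∑ b, ∑ b', ∑ θ : Fin (dA + 1), ∑ x : Fin dA, normSq ((P θ x * Y b b').trace) := by
    simp only [Complex.re_sum]
    rw [Finset.sum_congr rfl fun θ (_ : θ ∈ Finset.univ) =>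
      Finset.sum_congr rfl fun x (_ : x ∈ Finset.univ) => htermre θ x]
    exact sum_swap4 _
  rw [hre]
  have hkey : ∀ b b', ∑ θ : Fin (dA+1), ∑ x : Fin dA, normSq ((P θ x * Y b b').trace) ≤
      (1 + (1 - κ) / ((dA : ℝ) - 1)) * normSq (Y b b').trace
      + ((κ * dA - 1) / ((dA : ℝ) - 1)) * ∑ i, ∑ j, normSq (Y b b' i j) := by
    intro b b'
    exact keyY dA hd κ hκ1 hκ2 P (fun θ x => (hPos θ x).1) hPOVM hTr hUnbiased hSame (Y b b')
  calc (∑ b, ∑ b', ∑ θ : Fin (dA + 1), ∑ x : Fin dA, normSq ((P θ x * Y b b').trace))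
      ≤ ∑ b : Fin dB, ∑ b' : Fin dB, ((1 + (1 - κ) / ((dA : ℝ) - 1)) * normSq (Y b b').trace
        + ((κ * dA - 1) / ((dA : ℝ) - 1)) * ∑ i, ∑ j, normSq (Y b b' i j)) :=
      Finset.sum_le_sum fun b _ => Finset.sum_le_sum fun b' _ => hkey b b'
    _ = (1 + (1 - κ) / ((dA : ℝ) - 1)) * (∑ b, ∑ b', normSq (Y b b').trace)
        + ((κ * dA - 1) / ((dA : ℝ) - 1)) * (∑ b, ∑ b', ∑ i, ∑ j, normSq (Y b b' i j)) := by
      simp only [Finset.sum_add_distrib, Finset.mul_sum]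
    _ ≤ (1 + (1 - κ) / ((dA : ℝ) - 1)) + (κ * dA - 1) / ((dA : ℝ) - 1) := by
      have hd1 : (0:ℝ) < (dA:ℝ) - 1 := by
        have : (1:ℕ) < dA := by omega
        have : (1:ℝ) < (dA:ℝ) := by exact_mod_cast this
        linarith
      have hd0 : (0:ℝ) < (dA:ℝ) := by linarith
      have hg : 0 < (κ * dA - 1) / ((dA : ℝ) - 1) := by
        apply div_pos _ hd1
        have := (div_lt_iff₀ hd0).mp hκ1
        linarith [mul_comm κ (dA:ℝ)]
      have hf : 0 < 1 + (1 - κ) / ((dA : ℝ) - 1) := by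
        have : 0 ≤ (1 - κ) / ((dA:ℝ) - 1) := div_nonneg (by linarith) (le_of_lt hd1)
        linarith
      have h1 : (∑ b, ∑ b', normSq ((Y b b').trace)) = 1 := by
        have e1 : ∀ b b', (Y b b').trace = ptraceA dA dB X b b' := by
          intro b b'
          simp [ptraceA, Matrix.trace, Matrix.diag, hY]
        have e2 : ∀ b b' : Fin dB, ptraceA dA dB X b' b
            = (starRingEnd ℂ) (ptraceA dA dB X b b') := by
          intro b b'
          simp only [ptraceA, map_sum]
          exact Finset.sum_congr rfl fun a _ => hXconj _ _
        have e3 : (ptraceA dA dB X * ptraceA dA dB X).trace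
            = ((∑ b, ∑ b', normSq (ptraceA dA dB X b b') : ℝ) : ℂ) := by
          rw [trace_mul_sum]
          push_cast
          refine Finset.sum_congr rfl fun b _ => Finset.sum_congr rfl fun b' _ => ?_
          rw [e2 b b', Complex.mul_conj]
        rw [e3] at hXnorm
        have : (∑ b, ∑ b', normSq (ptraceA dA dB X b b') : ℝ) = 1 := by
          exact_mod_cast hXnorm
        rw [Finset.sum_congr rfl fun b _ => Finset.sum_congr rfl fun b' _ => by rw [e1 b b']]
        exact this
      have h2 : (∑ b, ∑ b', ∑ i, ∑ j, normSq (Y b b' i j)) ≤ 1 := by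
        have e4 : (X * X).trace = ((∑ b, ∑ b', ∑ i, ∑ j, normSq (Y b b' i j) : ℝ) : ℂ) := by
          rw [trace_mul_sum]
          push_cast
          have e5 : ∀ p q : Fin dA × Fin dB, X p q * X q p = (normSq (X p q) : ℂ) := by
            intro p q
            rw [hXconj p q, Complex.mul_conj]
          rw [Finset.sum_congr rfl fun p _ => Finset.sum_congr rfl fun q _ => e5 p q]
          rw [Fintype.sum_prod_type]
          rw [Finset.sum_congr rfl fun i (_ : i ∈ Finset.univ) =>
            Finset.sum_congr rfl fun b (_ : b ∈ Finset.univ) =>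
              (Fintype.sum_prod_type (f := fun q => ((normSq (X (i, b) q) : ℂ))))]
          exact sum_swap4' _
        have : (X * X).trace.re = (∑ b, ∑ b', ∑ i, ∑ j, normSq (Y b b' i j)) := by
          rw [e4, Complex.ofReal_re]
        linarith [hXcoll]
      nlinarith [h1, h2, hg, hf]
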